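/- The ideal I = ⟨x_1x_2 − x_3x_4, x_1x_2 − x_5x_6, x_1x_2 − x_7x_8⟩ in the polynomial ring K[x_1,...,x_8] equals the kernel of the K-algebra homomorphism π : K[x_1,...,x_8] → K[t_1,...,t_5] defined by π(x_1) = t_1t_5, π(x_2) = t_2t_3t_4t_5, π(x_3) = t_1t_2t_5, π(x_4) = t_3t_4t_5, π(x_5) = t_2t_3t_5, π(x_6) = t_1t_4t_5, π(x_7) = t_1t_3t_5, π(x_8) = t_2t_4t_5. In particular, I is a prime ideal. -/

import Mathlib

open MvPolynomial

noncomputable def mexp : Fin 8 → (Fin 5 →₀ ℕ) :=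
  ![Finsupp.single 0 1 + Finsupp.single 4 1,
    Finsupp.single 1 1 + Finsupp.single 2 1 + Finsupp.single 3 1 + Finsupp.single 4 1,
    Finsupp.single 0 1 + Finsupp.single 1 1 + Finsupp.single 4 1,
    Finsupp.single 2 1 + Finsupp.single 3 1 + Finsupp.single 4 1,
    Finsupp.single 1 1 + Finsupp.single 2 1 + Finsupp.single 4 1,
    Finsupp.single 0 1 + Finsupp.single 3 1 + Finsupp.single 4 1,
    Finsupp.single 0 1 + Finsupp.single 2 1 + Finsupp.single 4 1,
    Finsupp.single 1 1 + Finsupp.single 3 1 + Finsupp.single 4 1]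

noncomputable def Mmap (s : Fin 8 →₀ ℕ) : Fin 5 →₀ ℕ := s.sum fun i e => e • mexp i

lemma Mmap_apply (s : Fin 8 →₀ ℕ) (j : Fin 5) :
    Mmap s j = ∑ i : Fin 8, s i * mexp i j := by
  rw [Mmap, Finsupp.sum_apply, Finsupp.sum_fintype]
  · simp
  · intro i; simp

lemma phi_eq (K : Type*) [Field K] :
    ∀ i, (![X 0 * X 4, X 1 * X 2 * X 3 * X 4, X 0 * X 1 * X 4, X 2 * X 3 * X 4,
           X 1 * X 2 * X 4, X 0 * X 3 * X 4, X 0 * X 2 * X 4, X 1 * X 3 * X 4] :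
          Fin 8 → MvPolynomial (Fin 5) K) i = monomial (mexp i) 1 := by
  intro i
  fin_cases i <;> simp [mexp, X, monomial_mul] <;> rfl

lemma Mmap_add (s t : Fin 8 →₀ ℕ) : Mmap (s + t) = Mmap s + Mmap t := by
  unfold Mmap
  rw [Finsupp.sum_add_index] <;> simp [add_smul]

lemma Mmap_single (a : Fin 8) (b : ℕ) : Mmap (Finsupp.single a b) = b • mexp a := by
  unfold Mmap
  rw [Finsupp.sum_single_index] ; simp

lemma prod_pow_monomial (K : Type*) [Field K] (s : Fin 8 →₀ ℕ) :
    (s.prod fun i e => (monomial (mexp i) (1 : K)) ^ e) = monomial (Mmap s) 1 := by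
  induction s using Finsupp.induction with
  | zero => simp [Mmap]
  | single_add a b f ha hb ih =>
      rw [Finsupp.prod_add_index (by simp) (by intros; rw [pow_add]),
        Finsupp.prod_single_index (by simp), ih, Mmap_add, Mmap_single,
        monomial_pow, one_pow, monomial_mul, one_mul]

lemma aeval_mono (K : Type*) [Field K] (s : Fin 8 →₀ ℕ) (c : K) :
    (aeval (![X 0 * X 4, X 1 * X 2 * X 3 * X 4, X 0 * X 1 * X 4, X 2 * X 3 * X 4,
       X 1 * X 2 * X 4, X 0 * X 3 * X 4, X 0 * X 2 * X 4, X 1 * X 3 * X 4] :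
        Fin 8 → MvPolynomial (Fin 5) K)) (monomial s c) = monomial (Mmap s) c := by
  rw [aeval_monomial]
  simp only [phi_eq K]
  rw [prod_pow_monomial, algebraMap_eq, C_mul_monomial, mul_one]

def NormalE (s : Fin 8 →₀ ℕ) : Prop :=
  (s 2 = 0 ∨ s 3 = 0) ∧ (s 4 = 0 ∨ s 5 = 0) ∧ (s 6 = 0 ∨ s 7 = 0)

lemma mexp0 : mexp 0 = Finsupp.single 0 1 + Finsupp.single 4 1 := rfl
lemma mexp1 : mexp 1 = Finsupp.single 1 1 + Finsupp.single 2 1 + Finsupp.single 3 1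
    + Finsupp.single 4 1 := rfl
lemma mexp2 : mexp 2 = Finsupp.single 0 1 + Finsupp.single 1 1 + Finsupp.single 4 1 := rfl
lemma mexp3 : mexp 3 = Finsupp.single 2 1 + Finsupp.single 3 1 + Finsupp.single 4 1 := rfl
lemma mexp4 : mexp 4 = Finsupp.single 1 1 + Finsupp.single 2 1 + Finsupp.single 4 1 := rfl
lemma mexp5 : mexp 5 = Finsupp.single 0 1 + Finsupp.single 3 1 + Finsupp.single 4 1 := rfl
lemma mexp6 : mexp 6 = Finsupp.single 0 1 + Finsupp.single 2 1 + Finsupp.single 4 1 := rfl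
lemma mexp7 : mexp 7 = Finsupp.single 1 1 + Finsupp.single 3 1 + Finsupp.single 4 1 := rfl

lemma Mmap_inj {s t : Fin 8 →₀ ℕ} (hs : NormalE s) (ht : NormalE t)
    (h : Mmap s = Mmap t) : s = t := by
  obtain ⟨hs1, hs2, hs3⟩ := hs
  obtain ⟨ht1, ht2, ht3⟩ := ht
  have key : ∀ j, Mmap s j = Mmap t j := fun j => by rw [h]
  have e0 := key 0
  have e1 := key 1
  have e2 := key 2
  have e3 := key 3
  have e4 := key 4
  simp only [Mmap_apply, Fin.sum_univ_eight, mexp0, mexp1, mexp2, mexp3, mexp4, mexp5,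
    mexp6, mexp7, Finsupp.add_apply, Finsupp.single_apply] at e0 e1 e2 e3 e4
  simp +decide at e0 e1 e2 e3 e4
  ext i
  fin_cases i <;> simp <;> omega

lemma step_lemma (K : Type*) [Field K] (J : Ideal (MvPolynomial (Fin 8) K))
    (a : Fin 8 →₀ ℕ) (c : K) (i j : Fin 8) (hij : i ≠ j) (hi0 : i ≠ 0) (hi1 : i ≠ 1)
    (hj0 : j ≠ 0) (hj1 : j ≠ 1)
    (hg : X i * X j - X 0 * X 1 ∈ J) (hi : a i ≠ 0) (hj : a j ≠ 0) :
    ∃ a' : Fin 8 →₀ ℕ, monomial a c - monomial a' c ∈ J ∧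
      a' 0 = a 0 + 1 ∧ a' 1 = a 1 + 1 ∧ a' i = a i - 1 ∧ a' j = a j - 1 ∧
      ∀ k, k ≠ 0 → k ≠ 1 → k ≠ i → k ≠ j → a' k = a k := by
  classical
  set b := a - Finsupp.single i 1 - Finsupp.single j 1 with hb
  have hbk : ∀ k, b k = a k - (if i = k then 1 else 0) - (if j = k then 1 else 0) := by
    intro k
    rw [hb, Finsupp.tsub_apply, Finsupp.tsub_apply, Finsupp.single_apply,
      Finsupp.single_apply]
  have hab : a = Finsupp.single i 1 + Finsupp.single j 1 + b := by
    apply Finsupp.ext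
    intro k
    simp only [Finsupp.add_apply, hbk, Finsupp.single_apply]
    rcases eq_or_ne i k with rfl | hik
    · simp only [eq_self_iff_true, if_true, if_neg (Ne.symm hij)]
      omega
    · simp only [if_neg hik]
      rcases eq_or_ne j k with rfl | hjk
      · simp only [eq_self_iff_true, if_true]
        omega
      · simp only [if_neg hjk]
        omega
  refine ⟨Finsupp.single 0 1 + Finsupp.single 1 1 + b, ?_, ?_, ?_, ?_, ?_, ?_⟩
  · have h1 : (X i * X j : MvPolynomial (Fin 8) K) * monomial b c
        = monomial a c := by
      rw [hab]; simp [X, monomial_mul]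
    have h2 : (X 0 * X 1 : MvPolynomial (Fin 8) K) * monomial b c
        = monomial (Finsupp.single 0 1 + Finsupp.single 1 1 + b) c := by
      simp [X, monomial_mul]
    have key : monomial a c - monomial (Finsupp.single 0 1 + Finsupp.single 1 1 + b) c
        = (X i * X j - X 0 * X 1) * monomial b c := by
      rw [sub_mul, h1, h2]
    rw [key]
    exact Ideal.mul_mem_right _ _ hg
  · simp only [Finsupp.add_apply, hbk 0, Finsupp.single_apply, eq_self_iff_true, if_true,
      if_neg hi0, if_neg hj0, if_neg (show (1:Fin 8) ≠ 0 by decide)]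
    omega
  · simp only [Finsupp.add_apply, hbk 1, Finsupp.single_apply, eq_self_iff_true, if_true,
      if_neg hi1, if_neg hj1, if_neg (show (0:Fin 8) ≠ 1 by decide)]
    omega
  · simp only [Finsupp.add_apply, hbk i, Finsupp.single_apply, eq_self_iff_true, if_true,
      if_neg (Ne.symm hi0), if_neg (Ne.symm hi1), if_neg (Ne.symm hij)]
    omega
  · simp only [Finsupp.add_apply, hbk j, Finsupp.single_apply, eq_self_iff_true, if_true,
      if_neg (Ne.symm hj0), if_neg (Ne.symm hj1), if_neg hij]
    omega
  · intro k hk0 hk1 hki hkj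
    simp only [Finsupp.add_apply, hbk k, Finsupp.single_apply,
      if_neg (Ne.symm hk0), if_neg (Ne.symm hk1), if_neg (Ne.symm hki), if_neg (Ne.symm hkj)]
    omega

lemma reduce_monomial (K : Type*) [Field K] (J : Ideal (MvPolynomial (Fin 8) K))
    (hg1 : (X 2 * X 3 - X 0 * X 1 : MvPolynomial (Fin 8) K) ∈ J)
    (hg2 : (X 4 * X 5 - X 0 * X 1 : MvPolynomial (Fin 8) K) ∈ J)
    (hg3 : (X 6 * X 7 - X 0 * X 1 : MvPolynomial (Fin 8) K) ∈ J) :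
    ∀ (n : ℕ) (a : Fin 8 →₀ ℕ) (c : K),
      a 2 + a 3 + a 4 + a 5 + a 6 + a 7 ≤ n →
      ∃ g : MvPolynomial (Fin 8) K, monomial a c - g ∈ J ∧ ∀ b ∈ g.support, NormalE b := by
  intro n
  induction n with
  | zero =>
      intro a c hn
      refine ⟨monomial a c, by simp, ?_⟩
      intro b hb
      have hb' : b = a := by
        by_cases hc : c = 0 <;> simp [support_monomial, hc] at hb
        exact hb.symm
      subst hb'
      exact ⟨Or.inl (by omega), Or.inl (by omega), Or.inl (by omega)⟩
  | succ n ih =>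
      intro a c hn
      by_cases h1 : a 2 ≠ 0 ∧ a 3 ≠ 0
      · obtain ⟨a', hJ, h0, h1', h2, h3, hrest⟩ :=
          step_lemma K J a c 2 3 (by decide) (by decide) (by decide) (by decide) (by decide)
            hg1 h1.1 h1.2
        have e4 := hrest 4 (by decide) (by decide) (by decide) (by decide)
        have e5 := hrest 5 (by decide) (by decide) (by decide) (by decide)
        have e6 := hrest 6 (by decide) (by decide) (by decide) (by decide)
        have e7 := hrest 7 (by decide) (by decide) (by decide) (by decide)
        obtain ⟨g, hgJ, hgn⟩ := ih a' c (by omega)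
        refine ⟨g, ?_, hgn⟩
        have : monomial a c - g = (monomial a c - monomial a' c) + (monomial a' c - g) := by
          ring
        rw [this]
        exact J.add_mem hJ hgJ
      · by_cases h2 : a 4 ≠ 0 ∧ a 5 ≠ 0
        · obtain ⟨a', hJ, h0, h1', hi', hj', hrest⟩ :=
            step_lemma K J a c 4 5 (by decide) (by decide) (by decide) (by decide) (by decide)
              hg2 h2.1 h2.2
          have e2 := hrest 2 (by decide) (by decide) (by decide) (by decide)
          have e3 := hrest 3 (by decide) (by decide) (by decide) (by decide)
          have e6 := hrest 6 (by decide) (by decide) (by decide) (by decide)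
          have e7 := hrest 7 (by decide) (by decide) (by decide) (by decide)
          obtain ⟨g, hgJ, hgn⟩ := ih a' c (by omega)
          refine ⟨g, ?_, hgn⟩
          have : monomial a c - g = (monomial a c - monomial a' c) + (monomial a' c - g) := by
            ring
          rw [this]
          exact J.add_mem hJ hgJ
        · by_cases h3 : a 6 ≠ 0 ∧ a 7 ≠ 0
          · obtain ⟨a', hJ, h0, h1', hi', hj', hrest⟩ :=
              step_lemma K J a c 6 7 (by decide) (by decide) (by decide) (by decide) (by decide)
                hg3 h3.1 h3.2
            have e2 := hrest 2 (by decide) (by decide) (by decide) (by decide)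
            have e3 := hrest 3 (by decide) (by decide) (by decide) (by decide)
            have e4 := hrest 4 (by decide) (by decide) (by decide) (by decide)
            have e5 := hrest 5 (by decide) (by decide) (by decide) (by decide)
            obtain ⟨g, hgJ, hgn⟩ := ih a' c (by omega)
            refine ⟨g, ?_, hgn⟩
            have : monomial a c - g = (monomial a c - monomial a' c) + (monomial a' c - g) := by
              ring
            rw [this]
            exact J.add_mem hJ hgJ
          · refine ⟨monomial a c, by simp, ?_⟩
            intro b hb
            have hb' : b = a := by
              by_cases hc : c = 0 <;> simp [support_monomial, hc] at hb
              exact hb.symm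
            subst hb'
            exact ⟨by tauto, by tauto, by tauto⟩

lemma reduce_poly (K : Type*) [Field K] (J : Ideal (MvPolynomial (Fin 8) K))
    (hg1 : (X 2 * X 3 - X 0 * X 1 : MvPolynomial (Fin 8) K) ∈ J)
    (hg2 : (X 4 * X 5 - X 0 * X 1 : MvPolynomial (Fin 8) K) ∈ J)
    (hg3 : (X 6 * X 7 - X 0 * X 1 : MvPolynomial (Fin 8) K) ∈ J)
    (f : MvPolynomial (Fin 8) K) :
    ∃ g : MvPolynomial (Fin 8) K, f - g ∈ J ∧ ∀ b ∈ g.support, NormalE b := by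
  induction f using MvPolynomial.induction_on' with
  | monomial a c => exact reduce_monomial K J hg1 hg2 hg3 _ a c le_rfl
  | add p q hp hq =>
      obtain ⟨g1, hg1', hn1⟩ := hp
      obtain ⟨g2, hg2', hn2⟩ := hq
      refine ⟨g1 + g2, ?_, ?_⟩
      · have : p + q - (g1 + g2) = (p - g1) + (q - g2) := by ring
        rw [this]
        exact J.add_mem hg1' hg2'
      · intro b hb
        rcases Finset.mem_union.mp (MvPolynomial.support_add hb) with h | h
        · exact hn1 b h
        · exact hn2 b h

lemma normal_eq_zero (K : Type*) [Field K] (g : MvPolynomial (Fin 8) K)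
    (hg : ∀ b ∈ g.support, NormalE b)
    (h0 : (aeval (![X 0 * X 4, X 1 * X 2 * X 3 * X 4, X 0 * X 1 * X 4, X 2 * X 3 * X 4,
       X 1 * X 2 * X 4, X 0 * X 3 * X 4, X 0 * X 2 * X 4, X 1 * X 3 * X 4] :
        Fin 8 → MvPolynomial (Fin 5) K)) g = 0) : g = 0 := by
  classical
  have hsum : (aeval (![X 0 * X 4, X 1 * X 2 * X 3 * X 4, X 0 * X 1 * X 4, X 2 * X 3 * X 4,
       X 1 * X 2 * X 4, X 0 * X 3 * X 4, X 0 * X 2 * X 4, X 1 * X 3 * X 4] :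
        Fin 8 → MvPolynomial (Fin 5) K)) g
      = ∑ b ∈ g.support, monomial (Mmap b) (coeff b g) := by
    conv_lhs => rw [← support_sum_monomial_coeff g]
    rw [map_sum]
    exact Finset.sum_congr rfl fun b _ => aeval_mono K b (coeff b g)
  ext a
  by_cases ha : a ∈ g.support
  · have : coeff (Mmap a) (∑ b ∈ g.support, monomial (Mmap b) (coeff b g)) = coeff a g := by
      rw [coeff_sum]
      rw [Finset.sum_eq_single_of_mem a ha]
      · rw [coeff_monomial, if_pos rfl]
      · intro b hb hne
        rw [coeff_monomial, if_neg]
        intro hM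
        exact hne (Mmap_inj (hg b hb) (hg a ha) hM)
    rw [← this, ← hsum, h0]
    simp
  · simp [MvPolynomial.notMem_support_iff.mp ha]

lemma mexp_rel1 : mexp 0 + mexp 1 = mexp 2 + mexp 3 := by
  ext j
  fin_cases j <;>
    simp [mexp0, mexp1, mexp2, mexp3, Finsupp.single_apply] <;> decide

lemma mexp_rel2 : mexp 0 + mexp 1 = mexp 4 + mexp 5 := by
  ext j
  fin_cases j <;>
    simp [mexp0, mexp1, mexp4, mexp5, Finsupp.single_apply] <;> decide

lemma mexp_rel3 : mexp 0 + mexp 1 = mexp 6 + mexp 7 := by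
  ext j
  fin_cases j <;>
    simp [mexp0, mexp1, mexp6, mexp7, Finsupp.single_apply] <;> decide

theorem stmt1 (K : Type*) [Field K] (I : Ideal (MvPolynomial (Fin 8) K))
    (hI : I = Ideal.span
      {X 0 * X 1 - X 2 * X 3, X 0 * X 1 - X 4 * X 5, X 0 * X 1 - X 6 * X 7}) :
    I = RingHom.ker (MvPolynomial.aeval
        (![X 0 * X 4, X 1 * X 2 * X 3 * X 4, X 0 * X 1 * X 4, X 2 * X 3 * X 4,
           X 1 * X 2 * X 4, X 0 * X 3 * X 4, X 0 * X 2 * X 4, X 1 * X 3 * X 4] :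
          Fin 8 → MvPolynomial (Fin 5) K)).toRingHom ∧
    I.IsPrime := by
  subst hI
  set φ := (![X 0 * X 4, X 1 * X 2 * X 3 * X 4, X 0 * X 1 * X 4, X 2 * X 3 * X 4,
       X 1 * X 2 * X 4, X 0 * X 3 * X 4, X 0 * X 2 * X 4, X 1 * X 3 * X 4] :
        Fin 8 → MvPolynomial (Fin 5) K) with hφ
  set J : Ideal (MvPolynomial (Fin 8) K) := Ideal.span
      {X 0 * X 1 - X 2 * X 3, X 0 * X 1 - X 4 * X 5, X 0 * X 1 - X 6 * X 7} with hJ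
  have hm1 : (X 0 * X 1 - X 2 * X 3 : MvPolynomial (Fin 8) K) ∈ J :=
    Ideal.subset_span (by simp)
  have hm2 : (X 0 * X 1 - X 4 * X 5 : MvPolynomial (Fin 8) K) ∈ J :=
    Ideal.subset_span (by simp)
  have hm3 : (X 0 * X 1 - X 6 * X 7 : MvPolynomial (Fin 8) K) ∈ J :=
    Ideal.subset_span (by simp)
  have hg1 : (X 2 * X 3 - X 0 * X 1 : MvPolynomial (Fin 8) K) ∈ J := by
    rw [← neg_sub]; exact J.neg_mem hm1
  have hg2 : (X 4 * X 5 - X 0 * X 1 : MvPolynomial (Fin 8) K) ∈ J := by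
    rw [← neg_sub]; exact J.neg_mem hm2
  have hg3 : (X 6 * X 7 - X 0 * X 1 : MvPolynomial (Fin 8) K) ∈ J := by
    rw [← neg_sub]; exact J.neg_mem hm3
  have hle : J ≤ RingHom.ker (aeval φ).toRingHom := by
    rw [hJ, Ideal.span_le]
    rintro x hx
    simp only [Set.mem_insert_iff, Set.mem_singleton_iff] at hx
    have hx0 : (aeval φ) x = 0 := by
      rcases hx with rfl | rfl | rfl <;>
      · rw [map_sub, map_mul, map_mul, aeval_X, aeval_X, aeval_X, aeval_X, hφ]
        rw [phi_eq K, phi_eq K, phi_eq K, phi_eq K, monomial_mul, monomial_mul]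
        rw [sub_eq_zero]
        first
          | exact congrArg (fun e => (monomial e) ((1:K) * 1)) mexp_rel1
          | exact congrArg (fun e => (monomial e) ((1:K) * 1)) mexp_rel2
          | exact congrArg (fun e => (monomial e) ((1:K) * 1)) mexp_rel3
    exact hx0
  have haev : ∀ p ∈ J, (aeval φ) p = 0 := fun p hp => hle hp
  have hker : J = RingHom.ker (aeval φ).toRingHom := by
    apply le_antisymm
    · intro p hp
      exact haev p hp
    · intro f hf
      have hf0 : (aeval φ) f = 0 := hf
      obtain ⟨g, hfg, hgn⟩ := reduce_poly K J hg1 hg2 hg3 f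
      have hgf0 : (aeval φ) g = 0 := by
        have h1 : (aeval φ) (f - g) = 0 := haev _ hfg
        rw [map_sub, hf0] at h1
        rw [zero_sub, neg_eq_zero] at h1
        exact h1
      have hg0 : g = 0 := normal_eq_zero K g hgn hgf0
      rw [hg0, sub_zero] at hfg
      exact hfg
  refine ⟨hker, ?_⟩
  rw [hker]
  exact RingHom.ker_isPrime _
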